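/- Let P : [0,1] → ℝ^d be a polygonal curve with n segments and Q : [0,1] → ℝ^d a polygonal curve with m segments. Then for every integer k ≥ n·m, the k-Fréchet distance equals the Hausdorff distance: δ_kF(P,Q) = δ_H(P,Q). -/

import Mathlib

open Set Metric

noncomputable section

/-- The free space of two curves `P, Q : ℝ → ℝ^d` (restricted to the parameter
domain `[0,1] × [0,1]`) at distance threshold `ε`. -/
def freeSpace (d : ℕ) (P Q : ℝ → EuclideanSpace ℝ (Fin d)) (ε : ℝ) : Set (ℝ × ℝ) :=
  {p | p ∈ Icc (0:ℝ) 1 ×ˢ Icc (0:ℝ) 1 ∧ ‖P p.1 - Q p.2‖ ≤ ε}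

/-- A subset of `[0,1] × [0,1]` covers both parameter spaces if both of its
coordinate projections equal `[0,1]`. -/
def CoversBoth (S : Set (ℝ × ℝ)) : Prop :=
  Prod.fst '' S = Icc (0:ℝ) 1 ∧ Prod.snd '' S = Icc (0:ℝ) 1

/-- `c` is a connected component of the set `F`. -/
def IsComponentOf (F c : Set (ℝ × ℝ)) : Prop :=
  ∃ x ∈ F, c = connectedComponentIn F x

/-- The `k`-Fréchet distance: the infimum over all `ε ≥ 0` such that at most `k`
connected components of the free space cover both parameter spaces. -/
def kFrechetDist (d : ℕ) (k : ℕ) (P Q : ℝ → EuclideanSpace ℝ (Fin d)) : ℝ :=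
  sInf {ε : ℝ | 0 ≤ ε ∧ ∃ S : Set (Set (ℝ × ℝ)),
    (∀ c ∈ S, IsComponentOf (freeSpace d P Q ε) c) ∧ S.Finite ∧ S.ncard ≤ k ∧
    CoversBoth (⋃₀ S)}

/-- A reparametrization: a continuous surjection of `[0,1]` onto itself. -/
def IsReparam (σ : ℝ → ℝ) : Prop :=
  ContinuousOn σ (Icc 0 1) ∧ σ '' Icc (0:ℝ) 1 = Icc (0:ℝ) 1

/-- The weak Fréchet distance. -/
def weakFrechetDist (d : ℕ) (P Q : ℝ → EuclideanSpace ℝ (Fin d)) : ℝ :=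
  sInf {r : ℝ | ∃ σ τ : ℝ → ℝ, IsReparam σ ∧ IsReparam τ ∧
    r = ⨆ t : Icc (0:ℝ) 1, ‖P (σ ↑t) - Q (τ ↑t)‖}

/-- An orientation-preserving homeomorphism of `[0,1]`: a continuous bijection of
`[0,1]` onto itself fixing the endpoints. -/
def IsOrientedHomeo (σ : ℝ → ℝ) : Prop :=
  ContinuousOn σ (Icc 0 1) ∧ Set.BijOn σ (Icc (0:ℝ) 1) (Icc (0:ℝ) 1) ∧ σ 0 = 0 ∧ σ 1 = 1

/-- The (strong) Fréchet distance. -/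
def frechetDist (d : ℕ) (P Q : ℝ → EuclideanSpace ℝ (Fin d)) : ℝ :=
  sInf {r : ℝ | ∃ σ : ℝ → ℝ, IsOrientedHomeo σ ∧
    r = ⨆ t : Icc (0:ℝ) 1, ‖P ↑t - Q (σ ↑t)‖}

/-- The Hausdorff distance between the images of the two curves. -/
def hausdorffD (d : ℕ) (P Q : ℝ → EuclideanSpace ℝ (Fin d)) : ℝ :=
  Metric.hausdorffDist (P '' Icc (0:ℝ) 1) (Q '' Icc (0:ℝ) 1)

/-- `P` is affine on the interval `[a,b]`: it agrees there with an affine map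
`s ↦ u + s • v`. -/
def IsAffineOn {d : ℕ} (P : ℝ → EuclideanSpace ℝ (Fin d)) (a b : ℝ) : Prop :=
  ∃ u v : EuclideanSpace ℝ (Fin d), ∀ s ∈ Icc a b, P s = u + s • v

/-- `P` is a polygonal curve with `n` segments: it is continuous on `[0,1]` and
there is a partition `0 = s_0 < s_1 < ⋯ < s_n = 1` such that `P` is affine on each
subinterval `[s_{i-1}, s_i]`. -/
def IsPolygonal (d n : ℕ) (P : ℝ → EuclideanSpace ℝ (Fin d)) : Prop :=
  ContinuousOn P (Icc 0 1) ∧ ∃ s : Fin (n + 1) → ℝ,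
    s 0 = 0 ∧ s (Fin.last n) = 1 ∧ StrictMono s ∧
    ∀ i : Fin n, IsAffineOn P (s i.castSucc) (s i.succ)

lemma partition_cover {n : ℕ} (s : Fin (n + 1) → ℝ) (h0 : s 0 = 0)
    (h1 : s (Fin.last n) = 1) (hs : Monotone s) {x : ℝ} (hx : x ∈ Icc (0:ℝ) 1) :
    ∃ i : Fin n, x ∈ Icc (s i.castSucc) (s i.succ) := by
  rcases n with _ | n
  · exfalso
    have : (0 : Fin 1) = Fin.last 0 := rfl
    rw [this, h1] at h0; norm_num at h0
  classical
  set T : Finset (Fin (n + 2)) := Finset.univ.filter (fun j => s j ≤ x) with hT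
  have h0T : (0 : Fin (n+2)) ∈ T := by simp [hT, h0, hx.1]
  have hTne : T.Nonempty := ⟨0, h0T⟩
  set j := T.max' hTne with hj
  have hjT : j ∈ T := T.max'_mem hTne
  have hjx : s j ≤ x := by simpa [hT] using hjT
  by_cases hjn : (j : ℕ) < n + 1
  · refine ⟨⟨j, hjn⟩, ?_, ?_⟩
    · simpa [Fin.castSucc] using hjx
    · by_contra h
      push_neg at h
      have hmem : (⟨j, hjn⟩ : Fin (n+1)).succ ∈ T := by
        simp only [hT, Finset.mem_filter, Finset.mem_univ, true_and]
        exact le_of_lt h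
      have := T.le_max' _ hmem
      rw [← hj] at this
      have hlt : (j : ℕ) < ((⟨j, hjn⟩ : Fin (n+1)).succ : ℕ) := by simp
      exact absurd (Fin.le_def.mp this) (by omega)
  · have hjlast : j = Fin.last (n + 1) := by
      apply Fin.ext; simp only [Fin.val_last]; omega
    have hx1 : x = 1 := le_antisymm hx.2 (by rw [hjlast, h1] at hjx; exact hjx)
    refine ⟨Fin.last n, ?_, ?_⟩
    · have : s (Fin.last n).castSucc ≤ s (Fin.last (n+1)) := hs (by simp [Fin.le_def])
      rw [h1] at this; rw [hx1]; exact this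
    · have : (Fin.last n).succ = Fin.last (n + 1) := rfl
      rw [this, h1, hx1]

lemma convex_sublevel {E : Type*} [NormedAddCommGroup E] [NormedSpace ℝ E]
    (u v u' v' : E) (ε : ℝ) :
    Convex ℝ {p : ℝ × ℝ | ‖(u + p.1 • v) - (u' + p.2 • v')‖ ≤ ε} := by
  intro p hp q hq α β hα hβ hαβ
  simp only [Set.mem_setOf_eq] at hp hq ⊢
  have hβ' : β = 1 - α := by linarith
  subst hβ'
  have key : (u + (α • p + (1-α) • q).1 • v) - (u' + (α • p + (1-α) • q).2 • v')
      = α • ((u + p.1 • v) - (u' + p.2 • v')) + (1-α) • ((u + q.1 • v) - (u' + q.2 • v')) := by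
    simp only [Prod.fst_add, Prod.snd_add, Prod.smul_fst, Prod.smul_snd, smul_eq_mul]
    module
  rw [key]
  calc ‖_ + _‖ ≤ ‖α • ((u + p.1 • v) - (u' + p.2 • v'))‖ + ‖(1-α) • ((u + q.1 • v) - (u' + q.2 • v'))‖ :=
        norm_add_le _ _
    _ = α * ‖(u + p.1 • v) - (u' + p.2 • v')‖ + (1-α) * ‖(u + q.1 • v) - (u' + q.2 • v')‖ := by
        rw [norm_smul, norm_smul, Real.norm_of_nonneg hα, Real.norm_of_nonneg hβ]
    _ ≤ α * ε + (1-α) * ε := by gcongr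
    _ = ε := by ring

/-- For polygonal curves `P` with `n` segments and `Q` with `m` segments, and every
integer `k ≥ n·m`, the `k`-Fréchet distance equals the Hausdorff distance. -/
theorem kFrechet_eq_hausdorff_of_large_k
    (d n m : ℕ) (P Q : ℝ → EuclideanSpace ℝ (Fin d))
    (hP : IsPolygonal d n P) (hQ : IsPolygonal d m Q)
    (k : ℕ) (hk : n * m ≤ k) :
    kFrechetDist d k P Q = hausdorffD d P Q := by
  classical
  obtain ⟨hPc, sP, hsP0, hsP1, hsPmono, hsPaff⟩ := hP
  obtain ⟨hQc, sQ, hsQ0, hsQ1, hsQmono, hsQaff⟩ := hQ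
  -- n, m ≥ 1
  have hn : 0 < n := by
    rcases Nat.eq_zero_or_pos n with h | h
    · exfalso; subst h
      have e : (0 : Fin 1) = Fin.last 0 := rfl
      rw [e, hsP1] at hsP0; norm_num at hsP0
    · exact h
  have hm : 0 < m := by
    rcases Nat.eq_zero_or_pos m with h | h
    · exfalso; subst h
      have e : (0 : Fin 1) = Fin.last 0 := rfl
      rw [e, hsQ1] at hsQ0; norm_num at hsQ0
    · exact h
  -- partition points lie in [0,1]
  have hsPrange : ∀ i, sP i ∈ Icc (0:ℝ) 1 := fun i =>
    ⟨hsP0 ▸ hsPmono.monotone (Fin.zero_le i), hsP1 ▸ hsPmono.monotone (Fin.le_last i)⟩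
  have hsQrange : ∀ i, sQ i ∈ Icc (0:ℝ) 1 := fun i =>
    ⟨hsQ0 ▸ hsQmono.monotone (Fin.zero_le i), hsQ1 ▸ hsQmono.monotone (Fin.le_last i)⟩
  set Pimg := P '' Icc (0:ℝ) 1 with hPimg
  set Qimg := Q '' Icc (0:ℝ) 1 with hQimg
  have hPimg_ne : Pimg.Nonempty := ⟨P 0, 0, by norm_num, rfl⟩
  have hQimg_ne : Qimg.Nonempty := ⟨Q 0, 0, by norm_num, rfl⟩
  have hPcomp : IsCompact Pimg := isCompact_Icc.image_of_continuousOn hPc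
  have hQcomp : IsCompact Qimg := isCompact_Icc.image_of_continuousOn hQc
  have hedist : EMetric.hausdorffEdist Pimg Qimg ≠ ⊤ :=
    Metric.hausdorffEdist_ne_top_of_nonempty_of_bounded hPimg_ne hQimg_ne
      hPcomp.isBounded hQcomp.isBounded
  have hH0 : 0 ≤ hausdorffD d P Q := Metric.hausdorffDist_nonneg
  set A := {ε : ℝ | 0 ≤ ε ∧ ∃ S : Set (Set (ℝ × ℝ)),
    (∀ c ∈ S, IsComponentOf (freeSpace d P Q ε) c) ∧ S.Finite ∧ S.ncard ≤ k ∧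
    CoversBoth (⋃₀ S)} with hA
  have hkf : kFrechetDist d k P Q = sInf A := rfl
  -- lower bound part: every element of A dominates Hausdorff distance
  have hlow : ∀ ε ∈ A, hausdorffD d P Q ≤ ε := by
    rintro ε ⟨hε0, S, hcomp, -, -, hcov1, hcov2⟩
    have hSF : ∀ p ∈ ⋃₀ S, p ∈ freeSpace d P Q ε := by
      rintro p ⟨c, hcS, hpc⟩
      obtain ⟨x, hxF, hc⟩ := hcomp c hcS
      rw [hc] at hpc
      exact connectedComponentIn_subset _ _ hpc
    apply Metric.hausdorffDist_le_of_infDist hε0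
    · rintro x ⟨s, hs, rfl⟩
      rw [← hcov1] at hs
      obtain ⟨p, hpS, hps⟩ := hs
      obtain ⟨⟨-, hpt⟩, hpd⟩ := hSF p hpS
      refine (Metric.infDist_le_dist_of_mem (show Q p.2 ∈ Q '' Icc (0:ℝ) 1 from ⟨p.2, hpt, rfl⟩)).trans ?_
      rw [dist_eq_norm, ← hps]; exact hpd
    · rintro y ⟨t, ht, rfl⟩
      rw [← hcov2] at ht
      obtain ⟨p, hpS, hpt⟩ := ht
      obtain ⟨⟨hps, -⟩, hpd⟩ := hSF p hpS
      refine (Metric.infDist_le_dist_of_mem (show P p.1 ∈ P '' Icc (0:ℝ) 1 from ⟨p.1, hps, rfl⟩)).trans ?_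
      rw [dist_eq_norm, norm_sub_rev, ← hpt]; exact hpd
  -- upper bound part: every ε above the Hausdorff distance belongs to A
  have hmem : ∀ ε : ℝ, hausdorffD d P Q < ε → ε ∈ A := by
    intro ε hε
    have hε0 : 0 ≤ ε := hH0.trans hε.le
    set F := freeSpace d P Q ε with hF
    set cell : Fin n → Fin m → Set (ℝ × ℝ) := fun i j =>
      (Icc (sP i.castSucc) (sP i.succ) ×ˢ Icc (sQ j.castSucc) (sQ j.succ)) ∩ F with hcell
    have hcellF : ∀ i j, cell i j ⊆ F := fun i j => inter_subset_right
    have hcellconv : ∀ i j, Convex ℝ (cell i j) := by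
      intro i j
      obtain ⟨u, v, hu⟩ := hsPaff i
      obtain ⟨u', v', hu'⟩ := hsQaff j
      have heq : cell i j =
          (Icc (sP i.castSucc) (sP i.succ) ×ˢ Icc (sQ j.castSucc) (sQ j.succ)) ∩
          {p : ℝ × ℝ | ‖(u + p.1 • v) - (u' + p.2 • v')‖ ≤ ε} := by
        ext p
        simp only [hcell, hF, freeSpace, mem_inter_iff, mem_prod, mem_setOf_eq]
        constructor
        · rintro ⟨⟨h1, h2⟩, -, hd⟩
          refine ⟨⟨h1, h2⟩, ?_⟩
          rw [← hu p.1 h1, ← hu' p.2 h2]; exact hd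
        · rintro ⟨⟨h1, h2⟩, hd⟩
          have hp1 : p.1 ∈ Icc (0:ℝ) 1 :=
            ⟨(hsPrange i.castSucc).1.trans h1.1, h1.2.trans (hsPrange i.succ).2⟩
          have hp2 : p.2 ∈ Icc (0:ℝ) 1 :=
            ⟨(hsQrange j.castSucc).1.trans h2.1, h2.2.trans (hsQrange j.succ).2⟩
          refine ⟨⟨h1, h2⟩, ⟨hp1, hp2⟩, ?_⟩
          rw [hu p.1 h1, hu' p.2 h2]; exact hd
      rw [heq]
      exact ((convex_Icc _ _).prod (convex_Icc _ _)).inter (convex_sublevel u v u' v' ε)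
    have hFcells : ∀ p ∈ F, ∃ i j, p ∈ cell i j := by
      rintro p ⟨⟨hp1, hp2⟩, hpd⟩
      obtain ⟨i, hi⟩ := partition_cover sP hsP0 hsP1 hsPmono.monotone hp1
      obtain ⟨j, hj⟩ := partition_cover sQ hsQ0 hsQ1 hsQmono.monotone hp2
      exact ⟨i, j, ⟨hi, hj⟩, ⟨hp1, hp2⟩, hpd⟩
    -- the free space projects onto both parameter intervals
    have hproj1 : Prod.fst '' F = Icc (0:ℝ) 1 := by
      apply Subset.antisymm
      · rintro s ⟨p, ⟨⟨h1, -⟩, -⟩, rfl⟩; exact h1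
      · intro s hs
        obtain ⟨y, hy, hdy⟩ := Metric.exists_dist_lt_of_hausdorffDist_lt (show P s ∈ Pimg from ⟨s, hs, rfl⟩) (show Metric.hausdorffDist Pimg Qimg < ε from hε) hedist
        obtain ⟨t, ht, rfl⟩ := hy
        exact ⟨(s, t), ⟨⟨hs, ht⟩, by rw [← dist_eq_norm]; exact hdy.le⟩, rfl⟩
    have hproj2 : Prod.snd '' F = Icc (0:ℝ) 1 := by
      apply Subset.antisymm
      · rintro t ⟨p, ⟨⟨-, h2⟩, -⟩, rfl⟩; exact h2
      · intro t ht
        have hε' : Metric.hausdorffDist Qimg Pimg < ε := by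
          rwa [Metric.hausdorffDist_comm]
        obtain ⟨y, hy, hdy⟩ := Metric.exists_dist_lt_of_hausdorffDist_lt (show Q t ∈ Qimg from ⟨t, ht, rfl⟩) hε'
          (by rw [Metric.hausdorffEDist_comm]; exact hedist)
        obtain ⟨s, hs, rfl⟩ := hy
        refine ⟨(s, t), ⟨⟨hs, ht⟩, ?_⟩, rfl⟩
        rw [norm_sub_rev, ← dist_eq_norm]; exact hdy.le
    set S := {c : Set (ℝ × ℝ) | IsComponentOf F c} with hS
    have hSunion : ⋃₀ S = F := by
      apply Subset.antisymm
      · rintro p ⟨c, ⟨x, hxF, hc⟩, hpc⟩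
        rw [hc] at hpc
        exact connectedComponentIn_subset _ _ hpc
      · intro p hpF
        exact ⟨connectedComponentIn F p, ⟨p, hpF, rfl⟩, mem_connectedComponentIn hpF⟩
    have key : ∀ c ∈ S, ∃ ij : Fin n × Fin m, (cell ij.1 ij.2).Nonempty ∧ cell ij.1 ij.2 ⊆ c := by
      rintro c ⟨x, hxF, hc⟩
      obtain ⟨i, j, hxij⟩ := hFcells x hxF
      refine ⟨(i, j), ⟨x, hxij⟩, ?_⟩
      rw [hc]
      exact (hcellconv i j).isPreconnected.subset_connectedComponentIn hxij (hcellF i j)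
    set f : Set (ℝ × ℝ) → Fin n × Fin m := fun c =>
      if h : c ∈ S then (key c h).choose else (⟨0, hn⟩, ⟨0, hm⟩) with hf
    have hfspec : ∀ c (h : c ∈ S), (cell (f c).1 (f c).2).Nonempty ∧ cell (f c).1 (f c).2 ⊆ c := by
      intro c h
      simp only [hf, dif_pos h]
      exact (key c h).choose_spec
    have hinj : Set.InjOn f S := by
      intro c hc c' hc' hfe
      obtain ⟨⟨y, hy⟩, hsub⟩ := hfspec c hc
      obtain ⟨-, hsub'⟩ := hfspec c' hc'
      have hyc : y ∈ c := hsub hy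
      have hyc' : y ∈ c' := hsub' (hfe ▸ hy)
      obtain ⟨x, hxF, hceq⟩ := hc
      obtain ⟨x', hxF', hceq'⟩ := hc'
      rw [hceq] at hyc ⊢
      rw [hceq'] at hyc' ⊢
      rw [connectedComponentIn_eq hyc, connectedComponentIn_eq hyc']
    have hSfin : S.Finite := Set.Finite.of_finite_image (Set.toFinite _) hinj
    have hScard : S.ncard ≤ n * m := by
      have := Set.ncard_le_ncard_of_injOn f (fun a _ => mem_univ a) hinj finite_univ
      rwa [Set.ncard_univ, Nat.card_eq_fintype_card, Fintype.card_prod, Fintype.card_fin,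
        Fintype.card_fin] at this
    refine ⟨hε0, S, fun c hc => hc, hSfin, hScard.trans hk, ?_, ?_⟩
    · rw [hSunion]; exact hproj1
    · rw [hSunion]; exact hproj2
  -- conclude
  have hAne : A.Nonempty := ⟨hausdorffD d P Q + 1, hmem _ (by linarith)⟩
  have hbdd : BddBelow A := ⟨0, fun ε hε => hε.1⟩
  rw [hkf]
  apply le_antisymm
  · exact le_of_forall_gt_imp_ge_of_dense fun ε hε => csInf_le hbdd (hmem ε hε)
  · exact le_csInf hAne hlow
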